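/- arXiv:2207.09262 — 2 statements merged into one kernel-verified Lean document; each statement's English description precedes it below -/
import Mathlib

section
/- Let k ≥ 5 and let G be a k-connected almost-chordal graph. Then there is no minimal separator S of G and induced 4-cycle C of G such that S contains three (or more) vertices of C. -/
open SimpleGraph

variable {V : Type*}

/-- `f : ZMod n → V` enumerates the vertices of an induced (chordless) cycle of length `n`:
it is injective and two listed vertices are adjacent iff they are consecutive on the cycle. -/
def IsInducedCycle (G : SimpleGraph V) {n : ℕ} (f : ZMod n → V) : Prop :=
  Function.Injective f ∧
    ∀ i j : ZMod n, G.Adj (f i) (f j) ↔ (j = i + 1 ∨ i = j + 1)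

/-- A graph is chordal if it has no induced cycle of length at least 4. -/
def Chordal (G : SimpleGraph V) : Prop :=
  ∀ n : ℕ, 4 ≤ n → ∀ f : ZMod n → V, ¬ IsInducedCycle G f

/-- A hole is an induced chordless cycle of length at least 5. -/
def HasHole (G : SimpleGraph V) : Prop :=
  ∃ (n : ℕ) (f : ZMod n → V), 5 ≤ n ∧ IsInducedCycle G f

/-- A house: an induced 4-cycle together with a fifth vertex adjacent to exactly two
adjacent vertices of the 4-cycle (as an induced subgraph). -/
def HasHouse (G : SimpleGraph V) : Prop :=
  ∃ (f : ZMod 4 → V) (e : V), IsInducedCycle G f ∧ (∀ i, e ≠ f i) ∧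
    G.Adj e (f 0) ∧ G.Adj e (f 1) ∧ ¬ G.Adj e (f 2) ∧ ¬ G.Adj e (f 3)

/-- `s` is the vertex set of an induced 4-cycle of `G`. -/
def IsC4Set (G : SimpleGraph V) (s : Set V) : Prop :=
  ∃ f : ZMod 4 → V, IsInducedCycle G f ∧ s = Set.range f

/-- Almost-chordal: no hole, no induced house, and any two distinct induced 4-cycles
share at most one vertex. -/
def AlmostChordal (G : SimpleGraph V) : Prop :=
  ¬ HasHole G ∧ ¬ HasHouse G ∧
    ∀ s t : Set V, IsC4Set G s → IsC4Set G t → s ≠ t → (s ∩ t).Subsingleton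

/-- `G` is `k`-connected: more than `k` vertices, and removing fewer than `k` vertices
leaves it connected. -/
def KConnected {W : Type*} [Fintype W] (k : ℕ) (G : SimpleGraph W) : Prop :=
  k < Fintype.card W ∧
    ∀ S : Finset W, S.card < k → (G.induce ((↑S : Set W)ᶜ)).Connected

/-- The contraction `G/uv`: `v` is removed and merged into `u`, whose new neighbourhood is
`(N(u) ∪ N(v)) \ {u, v}`. -/
def contractEdge (G : SimpleGraph V) (u v : V) : SimpleGraph {x : V // x ≠ v} :=
  SimpleGraph.fromRel fun a b =>
    G.Adj a.1 b.1 ∨ (a.1 = u ∧ G.Adj v b.1) ∨ (b.1 = u ∧ G.Adj v a.1)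

/-- `S` is a separator: its removal disconnects `G`. -/
def IsSeparator (G : SimpleGraph V) (S : Finset V) : Prop :=
  ¬ (G.induce ((↑S : Set V)ᶜ)).Preconnected

/-- `S` is a minimal separator: it is a separator and removing any set of fewer than `|S|`
vertices leaves `G` connected. -/
def IsMinimalSeparator (G : SimpleGraph V) (S : Finset V) : Prop :=
  IsSeparator G S ∧
    ∀ S' : Finset V, S'.card < S.card → (G.induce ((↑S' : Set V)ᶜ)).Connected


section AuxProofs

variable {G : SimpleGraph V}


variable {G : SimpleGraph V}

/-- Reachability by a walk avoiding the finite set `S`. -/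
private def RA (G : SimpleGraph V) (S : Finset V) (u v : V) : Prop :=
  ∃ w : G.Walk u v, ∀ x ∈ w.support, x ∉ S

private lemma RA.symm {S : Finset V} {u v : V} (h : RA G S u v) : RA G S v u := by
  obtain ⟨w, hw⟩ := h
  exact ⟨w.reverse, by simpa [SimpleGraph.Walk.support_reverse] using hw⟩

private lemma RA.trans {S : Finset V} {u v x : V} (h : RA G S u v) (h' : RA G S v x) :
    RA G S u x := by
  obtain ⟨w, hw⟩ := h; obtain ⟨w', hw'⟩ := h'
  refine ⟨w.append w', fun z hz => ?_⟩
  rw [SimpleGraph.Walk.mem_support_append_iff] at hz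
  rcases hz with hz | hz
  · exact hw z hz
  · exact hw' z hz

private lemma RA.refl {S : Finset V} {u : V} (hu : u ∉ S) : RA G S u u :=
  ⟨SimpleGraph.Walk.nil, by simpa using hu⟩

private lemma RA.adj {S : Finset V} {u v : V} (h : G.Adj u v) (hu : u ∉ S) (hv : v ∉ S) :
    RA G S u v :=
  ⟨SimpleGraph.Walk.cons h SimpleGraph.Walk.nil, by
    intro x hx
    simp only [SimpleGraph.Walk.support_cons, SimpleGraph.Walk.support_nil,
      List.mem_cons, List.mem_singleton] at hx
    rcases hx with rfl | rfl | h; · exact hu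
    · exact hv
    · simp at h⟩

/-- Lift a walk with support in `s` to reachability in the induced subgraph. -/
private lemma reach_ind {s : Set V} :
    ∀ {u v : V} (w : G.Walk u v), (∀ x ∈ w.support, x ∈ s) → ∀ (hu : u ∈ s) (hv : v ∈ s),
      (G.induce s).Reachable ⟨u, hu⟩ ⟨v, hv⟩ := by
  intro u v w
  induction w with
  | nil => intro _ hu hv; exact Reachable.refl _
  | @cons u d v h p ih =>
    intro hw hu hv
    have hd : d ∈ s := hw d (by simp [SimpleGraph.Walk.support_cons])
    have hadj : (G.induce s).Adj ⟨u, hu⟩ ⟨d, hd⟩ := h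
    exact hadj.reachable.trans
      (ih (fun x hx => hw x (by simp [SimpleGraph.Walk.support_cons, hx])) hd hv)

/-- From reachability in the induced subgraph, obtain a walk with support in `s`. -/
private lemma walk_of_reach {s : Set V} {u v : ↑s} (h : (G.induce s).Reachable u v) :
    ∃ w : G.Walk u.1 v.1, ∀ x ∈ w.support, x ∈ s := by
  obtain ⟨p⟩ := h
  refine ⟨p.map ⟨Subtype.val, fun h => h⟩, fun x hx => ?_⟩
  rw [SimpleGraph.Walk.support_map, List.mem_map] at hx
  obtain ⟨t, _, rfl⟩ := hx
  exact t.2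

/-- All vertices on an `S`-avoiding walk are `RA`-reachable from its start. -/
private lemma RA_all {S : Finset V} :
    ∀ {c d : V} (w : G.Walk c d), (∀ x ∈ w.support, x ∉ S) → ∀ z ∈ w.support, RA G S c z := by
  intro c d w
  induction w with
  | nil =>
    intro h z hz
    simp only [SimpleGraph.Walk.support_nil, List.mem_singleton] at hz
    subst hz
    exact RA.refl (h z (by simp))
  | @cons c d v h p ih =>
    intro hsup z hz
    rw [SimpleGraph.Walk.support_cons, List.mem_cons] at hz
    have hc : c ∉ S := hsup c (by simp [SimpleGraph.Walk.support_cons])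
    have hd : d ∉ S := hsup d (by simp [SimpleGraph.Walk.support_cons,
      p.start_mem_support])
    rcases hz with rfl | hz
    · exact RA.refl hc
    · exact RA.trans (RA.adj h hc hd)
        (ih (fun x hx => hsup x (by simp [SimpleGraph.Walk.support_cons, hx])) z hz)

/-- Given a walk from `c ∉ S` to `s ∈ S` all of whose vertices are `s` or avoid `S`,
the vertex `s` has a neighbour outside `S` which is `RA`-reachable from `c`. -/
private lemma exists_nbr {S : Finset V} {s : V} (hs : s ∈ S) :
    ∀ {c : V} (w : G.Walk c s), c ∉ S → (∀ x ∈ w.support, x = s ∨ x ∉ S) →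
      ∃ x, G.Adj s x ∧ x ∉ S ∧ RA G S c x := by
  intro c w
  induction w with
  | nil => intro hc _; exact absurd hs hc
  | @cons c d v h p ih =>
    intro hc hsup
    by_cases hd : d = v
    · subst hd
      exact ⟨c, h.symm, hc, RA.refl hc⟩
    · have hdS : d ∉ S := by
        have := hsup d (by simp [SimpleGraph.Walk.support_cons, p.start_mem_support])
        tauto
      obtain ⟨x, hx1, hx2, hx3⟩ := ih hs hdS
        (fun x hx => hsup x (by simp [SimpleGraph.Walk.support_cons, hx]))
      exact ⟨x, hx1, hx2, RA.trans (RA.adj h hc hdS) hx3⟩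

private lemma getElemc (L : List V) {i j : ℕ} (h : i = j) (hi : i < L.length) :
    L[i] = L[j]'(h ▸ hi) := by subst h; rfl


private lemma splice (L : List V) (i j : ℕ) (hij : i < j) (hjL : j < L.length)
    (hchain : L.Chain' G.Adj)
    (hAdj : G.Adj (L[i]'(lt_trans hij hjL)) (L[j]'hjL)) :
    ∃ L' : List V, L'.length + j = L.length + i + 1 ∧ L'.Chain' G.Adj ∧
      L'.head? = L.head? ∧ L'.getLast? = L.getLast? ∧ ∀ x ∈ L', x ∈ L := by
  have hiL : i < L.length := lt_trans hij hjL
  have hne : L ≠ [] := List.ne_nil_of_length_pos (by omega)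
  have htlen : (L.take (i+1)).length = i + 1 := by
    rw [List.length_take]; omega
  have htne : L.take (i+1) ≠ [] := List.ne_nil_of_length_pos (by omega)
  have hdne : L.drop j ≠ [] := List.ne_nil_of_length_pos (by simp; omega)
  have hdlen : (L.drop j).length = L.length - j := by simp
  -- getLast? of the take part
  have htlast : (L.take (i+1)).getLast? = some (L[i]'hiL) := by
    rw [List.getLast?_eq_getLast htne, List.getLast_eq_getElem]
    congr 1
    rw [List.getElem_take]
    exact getElemc L (by omega) _
  -- head? of the drop part
  have hdhead : (L.drop j).head? = some (L[j]'hjL) := by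
    rw [List.head?_eq_head hdne, List.head_eq_getElem]
    congr 1
    rw [List.getElem_drop]
    exact getElemc L (by omega) _
  refine ⟨L.take (i+1) ++ L.drop j, ?_, ?_, ?_, ?_, ?_⟩
  · rw [List.length_append, htlen, hdlen]; omega
  · show List.IsChain _ _; rw [List.isChain_append]
    refine ⟨hchain.take _, hchain.drop _, ?_⟩
    intro x hx y hy
    rw [htlast, Option.mem_some_iff] at hx
    rw [hdhead, Option.mem_some_iff] at hy
    subst hx; subst hy
    exact hAdj
  · rw [List.head?_append_of_ne_nil _ htne]
    obtain ⟨a, t, rfl⟩ := List.exists_cons_of_ne_nil hne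
    simp [List.take_succ_cons]
  · rw [List.getLast?_append_of_ne_nil _ hdne]
    rw [List.getLast?_eq_getLast hdne, List.getLast?_eq_getLast hne,
      List.getLast_eq_getElem, List.getLast_eq_getElem]
    congr 1
    rw [List.getElem_drop]
    exact getElemc L (by simp; omega) _
  · intro x hx
    rcases List.mem_append.1 hx with hx | hx
    · exact List.mem_of_mem_take hx
    · exact List.mem_of_mem_drop hx

private lemma exists_min_list (T : Set V) {u v : V} (huv : u ≠ v)
    (hadj : ¬ G.Adj u v) (w0 : G.Walk u v) (hw0 : ∀ x ∈ w0.support, x ∈ T) :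
    ∃ (L : List V) (h3 : 3 ≤ L.length), L.Nodup ∧ (∀ x ∈ L, x ∈ T) ∧
      (∀ i : ℕ, (h : i + 1 < L.length) → G.Adj (L[i]'(by omega)) (L[i+1]'h)) ∧
      (∀ (i j : ℕ) (hj : j < L.length) (hij : i + 1 < j), ¬ G.Adj (L[i]'(by omega)) (L[j]'hj)) ∧
      L[0]'(by omega) = u ∧ (L[L.length - 1]'(by omega)) = v := by
  classical
  set P : ℕ → Prop := fun n => ∃ L : List V, L.length = n ∧ L.Chain' G.Adj ∧
    L.head? = some u ∧ L.getLast? = some v ∧ ∀ x ∈ L, x ∈ T with hPdef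
  have hex : ∃ n, P n := by
    refine ⟨w0.support.length, w0.support, rfl, w0.isChain_adj_support, ?_, ?_, hw0⟩
    · rw [List.head?_eq_head w0.support_ne_nil, w0.head_support]
    · rw [List.getLast?_eq_getLast w0.support_ne_nil, w0.getLast_support]
  obtain ⟨L, hlen, hchain, hhead, hlast, hmem⟩ := Nat.find_spec hex
  have hmin : ∀ m, m < Nat.find hex → ¬ P m := fun m hm => Nat.find_min hex hm
  have hne : L ≠ [] := by intro h; rw [h] at hhead; simp at hhead
  have hpos : 0 < L.length := List.length_pos_iff.2 hne
  have hL0 : L[0]'hpos = u := by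
    rw [List.head?_eq_head hne] at hhead
    rw [← List.head_eq_getElem hne]
    exact Option.some_injective _ hhead
  have hLlast : L[L.length - 1]'(by omega) = v := by
    rw [List.getLast?_eq_getLast hne] at hlast
    rw [← List.getLast_eq_getElem hne]
    exact Option.some_injective _ hlast
  have hchainIdx : ∀ i : ℕ, (h : i + 1 < L.length) → G.Adj (L[i]'(by omega)) (L[i+1]'h) := by
    intro i h
    have := List.isChain_iff_getElem.1 hchain i (by omega)
    simpa [List.get_eq_getElem] using this
  have h2 : 2 ≤ L.length := by
    by_contra h
    apply huv
    rw [← hL0, ← hLlast]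
    exact getElemc L (by omega) _
  have h3 : 3 ≤ L.length := by
    by_contra h
    apply hadj
    have h1 : L.length = 2 := by omega
    have := hchainIdx 0 (by omega)
    rw [hL0, getElemc L (show 1 = L.length - 1 by omega)] at this
    rw [hLlast] at this
    exact this
  have hshort : ∀ (i j : ℕ) (hj : j < L.length) (hij : i < j),
      G.Adj (L[i]'(by omega)) (L[j]'hj) → j = i + 1 := by
    intro i j hj hij hAdj
    by_contra hne'
    obtain ⟨L', hlen', hchain', hhead', hlast', hmem'⟩ := splice L i j hij hj hchain hAdj
    have hP' : P L'.length := ⟨L', rfl, hchain', by rw [hhead']; exact hhead,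
      by rw [hlast']; exact hlast, fun x hx => hmem x (hmem' x hx)⟩
    have hlt : L'.length < L.length := by omega
    rw [hlen] at hlt
    exact hmin L'.length hlt hP'
  have hnodup : L.Nodup := by
    have key : ∀ i j (hj : j < L.length) (hij : i < j), L[i]'(by omega) = L[j]'hj → False := by
      intro i j hj hij heq
      by_cases hjl : j + 1 < L.length
      · have hAdj : G.Adj (L[i]'(by omega)) (L[j+1]'hjl) := by
          rw [heq]; exact hchainIdx j hjl
        have := hshort i (j+1) hjl (by omega) hAdj
        omega
      · have htne : L.take (i+1) ≠ [] :=
          List.ne_nil_of_length_pos (by rw [List.length_take]; omega)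
        have hP' : P (i+1) := by
          refine ⟨L.take (i+1), by rw [List.length_take]; omega, hchain.take _, ?_, ?_,
            fun x hx => hmem x (List.mem_of_mem_take hx)⟩
          · obtain ⟨a, t, hLat⟩ := List.exists_cons_of_ne_nil hne
            rw [hLat, List.take_succ_cons, List.head?_cons]
            rw [hLat, List.head?_cons] at hhead
            exact hhead
          · rw [List.getLast?_eq_getLast htne, List.getLast_eq_getElem]
            have : (L.take (i+1))[(L.take (i+1)).length - 1]'(by
                rw [List.length_take]; omega) = L[i]'(by omega) := by
              rw [List.getElem_take]
              exact getElemc L (by rw [List.length_take]; omega) _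
            rw [this, heq, getElemc L (show j = L.length - 1 by omega), hLlast]
        have hlt : i + 1 < L.length := by omega
        rw [hlen] at hlt
        exact hmin (i+1) hlt hP'
    rw [List.nodup_iff_injective_get]
    intro ⟨i, hi⟩ ⟨j, hj⟩ hgij
    simp only [List.get_eq_getElem] at hgij
    by_contra hne'
    have hij : i ≠ j := fun h => hne' (by subst h; rfl)
    rcases Nat.lt_or_ge i j with h | h
    · exact key i j hj h hgij
    · exact key j i hi (by omega) hgij.symm
  refine ⟨L, h3, hnodup, hmem, hchainIdx, ?_, hL0, hLlast⟩
  intro i j hj hij hAdj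
  have := hshort i j hj (by omega) hAdj
  omega

private lemma cycle_of_list (L : List V) (m : ℕ) (hm : L.length = m) (h3 : 3 ≤ m) (hd : V)
    (hnd : L.Nodup)
    (hchain : ∀ i : ℕ, (h : i + 1 < L.length) → G.Adj (L[i]'(by omega)) (L[i+1]'h))
    (hwrap : G.Adj (L[L.length - 1]'(by omega)) (L[0]'(by omega)))
    (hchord : ∀ (i j : ℕ) (hj : j < L.length) (hij : i < j),
      G.Adj (L[i]'(by omega)) (L[j]'hj) → j = i + 1 ∨ (i = 0 ∧ j = L.length - 1)) :
    IsInducedCycle G (fun k : ZMod m => L.getD k.val hd) := by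
  subst hm
  haveI : NeZero L.length := ⟨by omega⟩
  have hval : ∀ k : ZMod L.length, k.val < L.length := fun k => ZMod.val_lt k
  have hgetD : ∀ k : ZMod L.length, L.getD k.val hd = L[k.val]'(hval k) := fun k =>
    List.getD_eq_getElem L hd (hval k)
  have hplus : ∀ k : ZMod L.length, (k + 1).val = (k.val + 1) % L.length := by
    intro k
    rw [ZMod.val_add, ZMod.val_one_eq_one_mod]
    conv_rhs => rw [Nat.add_mod, Nat.mod_eq_of_lt (hval k)]
  -- adjacency of cyclically consecutive entries
  have hadjc : ∀ p q : ℕ, (hp : p < L.length) → (hq : q < L.length) →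
      q = (p + 1) % L.length → G.Adj (L[p]'(by omega)) (L[q]'(by omega)) := by
    intro p q hp hq hpq
    by_cases hlt : p + 1 < L.length
    · rw [Nat.mod_eq_of_lt hlt] at hpq
      subst hpq
      exact hchain p hlt
    · have hp1 : p + 1 = L.length := by omega
      have hq0 : q = 0 := by rw [hpq, hp1, Nat.mod_self]
      subst hq0
      have : p = L.length - 1 := by omega
      subst this
      exact hwrap
  constructor
  · intro k1 k2 h
    simp only [hgetD] at h
    exact ZMod.val_injective _ (hnd.getElem_inj_iff.1 h)
  · intro i j
    simp only [hgetD]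
    constructor
    · intro hAdj
      have hiv := hval i
      have hjv := hval j
      rcases lt_trichotomy i.val j.val with h | h | h
      · rcases hchord i.val j.val (hval j) h hAdj with h1 | ⟨h1, h2⟩
        · left
          apply ZMod.val_injective
          rw [hplus, Nat.mod_eq_of_lt (by omega), h1]
        · right
          apply ZMod.val_injective
          rw [hplus, h2, h1, show L.length - 1 + 1 = L.length by omega, Nat.mod_self]
      · exfalso
        have : i = j := ZMod.val_injective _ h
        subst this
        exact G.irrefl hAdj
      · rcases hchord j.val i.val (hval i) h hAdj.symm with h1 | ⟨h1, h2⟩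
        · right
          apply ZMod.val_injective
          rw [hplus, Nat.mod_eq_of_lt (by omega), h1]
        · left
          apply ZMod.val_injective
          rw [hplus, h2, h1, show L.length - 1 + 1 = L.length by omega, Nat.mod_self]
    · intro hc
      rcases hc with rfl | rfl
      · exact hadjc i.val (i+1).val (hval i) (hval (i+1)) (hplus i)
      · exact (hadjc j.val (j+1).val (hval j) (hval (j+1)) (hplus j)).symm

private lemma rot {n : ℕ} {f : ZMod n → V} (h : IsInducedCycle G f) (c : ZMod n) :
    IsInducedCycle G (fun i => f (i + c)) := by
  obtain ⟨hinj, hadj⟩ := h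
  constructor
  · intro a b hab
    exact add_right_cancel (hinj hab)
  · intro i j
    rw [hadj]
    constructor
    · rintro (h | h)
      · left; linear_combination h
      · right; linear_combination h
    · rintro (h | h)
      · left; linear_combination h
      · right; linear_combination h

end AuxProofs

/-- In a `k`-connected almost-chordal graph with `k ≥ 5`, no minimal separator contains
three vertices of an induced 4-cycle (STATEMENT 10). -/
theorem almost_chordal_minimal_separator_C4 [Fintype V] [DecidableEq V]
    (k : ℕ) (hk : 5 ≤ k) (G : SimpleGraph V)
    (hconn : KConnected k G) (hac : AlmostChordal G) :
    ¬ ∃ (S : Finset V) (f : ZMod 4 → V),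
        IsMinimalSeparator G S ∧ IsInducedCycle G f ∧
        3 ≤ (Finset.univ.filter (fun i : ZMod 4 => f i ∈ S)).card := by
  rintro ⟨S, f0, ⟨hsep, hminS⟩, hcyc0, hcount⟩
  classical
  -- at most one vertex of the cycle is outside S
  have hj : ∃ j : ZMod 4, ∀ i : ZMod 4, i ≠ j → f0 i ∈ S := by
    by_contra hcon
    push_neg at hcon
    obtain ⟨i0, hi0ne, hi0⟩ := hcon 0
    obtain ⟨i1, hi1ne, hi1⟩ := hcon i0
    have hsub : Finset.univ.filter (fun i : ZMod 4 => f0 i ∈ S) ⊆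
        Finset.univ \ {i0, i1} := by
      intro x hx
      simp only [Finset.mem_filter] at hx
      simp only [Finset.mem_sdiff, Finset.mem_insert, Finset.mem_singleton, Finset.mem_univ,
        true_and]
      rintro (rfl | rfl)
      · exact hi0 hx.2
      · exact hi1 hx.2
    have hc2 : ({i0, i1} : Finset (ZMod 4)).card = 2 := by
      rw [Finset.card_insert_of_notMem (by simp [hi1ne.symm]), Finset.card_singleton]
    have hcu : (Finset.univ : Finset (ZMod 4)).card = 4 := by decide
    have := Finset.card_le_card hsub
    rw [Finset.card_sdiff_of_subset (Finset.subset_univ _), hc2, hcu] at this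
    omega
  obtain ⟨j, hj⟩ := hj
  set f : ZMod 4 → V := fun i => f0 (i + (j + 1)) with hfdef
  have hcyc : IsInducedCycle G f := rot hcyc0 (j + 1)
  have hS0 : f 0 ∈ S := hj _ (by
    intro h
    have : (1 : ZMod 4) = 0 := by linear_combination h
    exact absurd this (by decide))
  have hS1 : f 1 ∈ S := hj _ (by
    intro h
    have : (2 : ZMod 4) = 0 := by linear_combination h
    exact absurd this (by decide))
  have hS2 : f 2 ∈ S := hj _ (by
    intro h
    have : (3 : ZMod 4) = 0 := by linear_combination h
    exact absurd this (by decide))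
  have h02 : f 0 ≠ f 2 := by
    intro h
    have := hcyc.1 h
    exact absurd this (by decide)
  have h10 : f 1 ≠ f 0 := by
    intro h
    have := hcyc.1 h
    exact absurd this (by decide)
  have h12 : f 1 ≠ f 2 := by
    intro h
    have := hcyc.1 h
    exact absurd this (by decide)
  have hnadj02 : ¬ G.Adj (f 0) (f 2) := by
    rw [hcyc.2]
    decide
  -- two vertices in different components of G - S
  obtain ⟨a', b', hnr⟩ : ∃ u v : ((↑S : Set V)ᶜ : Set V),
      ¬ (G.induce (↑S : Set V)ᶜ).Reachable u v := by
    by_contra hcon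
    push_neg at hcon
    exact hsep fun u v => hcon u v
  obtain ⟨a, haS'⟩ := a'
  obtain ⟨b, hbS'⟩ := b'
  have haS : a ∉ S := by simpa using haS'
  have hbS : b ∉ S := by simpa using hbS'
  have hnRA : ¬ RA G S a b := by
    rintro ⟨w, hw⟩
    exact hnr (reach_ind w (fun x hx => by simpa using hw x hx) haS' hbS')
  -- every vertex of S has a neighbour in each component
  have key : ∀ s ∈ S, ∀ c, c ∉ S → ∃ x, G.Adj s x ∧ x ∉ S ∧ RA G S c x := by
    intro s hs c hc
    have hcard : (S.erase s).card < S.card := Finset.card_erase_lt_of_mem hs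
    have hconn' := (hminS _ hcard).preconnected
    have hre := hconn' ⟨c, by simp [hc]⟩ ⟨s, by simp⟩
    obtain ⟨w, hw⟩ := walk_of_reach hre
    refine exists_nbr hs w hc ?_
    intro x hx
    have hx' := hw x hx
    simp only [Set.mem_compl_iff, Finset.coe_erase, Set.mem_diff, Finset.mem_coe,
      Set.mem_singleton_iff] at hx'
    by_cases hxs : x = s
    · exact Or.inl hxs
    · right
      intro hxS
      exact hx' ⟨hxS, hxs⟩
  obtain ⟨xA, hxAadj, hxAnS, hxAra⟩ := key (f 0) hS0 a haS
  obtain ⟨yA, hyAadj, hyAnS, hyAra⟩ := key (f 2) hS2 a haS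
  obtain ⟨xB, hxBadj, hxBnS, hxBra⟩ := key (f 0) hS0 b hbS
  obtain ⟨yB, hyBadj, hyBnS, hyBra⟩ := key (f 2) hS2 b hbS
  set QA : V → Prop := fun x => x ∉ S ∧ RA G S a x with hQAdef
  set QB : V → Prop := fun x => x ∉ S ∧ RA G S b x with hQBdef
  have noAB : ∀ x y, QA x → QB y → ¬ G.Adj x y := by
    rintro x y ⟨hx1, hx2⟩ ⟨hy1, hy2⟩ hAdj
    exact hnRA (RA.trans (RA.trans hx2 (RA.adj hAdj hx1 hy1)) hy2.symm)
  have disj : ∀ x, QA x → QB x → False := fun x hx hy =>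
    hnRA (RA.trans hx.2 hy.2.symm)
  -- minimal induced path through the component of a
  obtain ⟨wA0, hwA0⟩ : RA G S xA yA := RA.trans hxAra.symm hyAra
  obtain ⟨LA, hA3, hAnd, hAmem, hAchain, hAchord, hA0, hAlast⟩ :=
    exists_min_list (G := G) {x | x = f 0 ∨ x = f 2 ∨ QA x} h02 hnadj02
      (SimpleGraph.Walk.cons hxAadj (wA0.concat hyAadj.symm)) (by
        intro x hx
        rw [SimpleGraph.Walk.support_cons, List.mem_cons] at hx
        rcases hx with rfl | hx
        · exact Or.inl rfl
        · rw [SimpleGraph.Walk.support_concat, List.mem_append,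
            List.mem_singleton] at hx
          rcases hx with hx | rfl
          · exact Or.inr (Or.inr ⟨hwA0 x hx, RA.trans hxAra (RA_all wA0 hwA0 x hx)⟩)
          · exact Or.inr (Or.inl rfl))
  obtain ⟨wB0, hwB0⟩ : RA G S xB yB := RA.trans hxBra.symm hyBra
  obtain ⟨LB, hB3, hBnd, hBmem, hBchain, hBchord, hB0, hBlast⟩ :=
    exists_min_list (G := G) {x | x = f 0 ∨ x = f 2 ∨ QB x} h02 hnadj02
      (SimpleGraph.Walk.cons hxBadj (wB0.concat hyBadj.symm)) (by
        intro x hx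
        rw [SimpleGraph.Walk.support_cons, List.mem_cons] at hx
        rcases hx with rfl | hx
        · exact Or.inl rfl
        · rw [SimpleGraph.Walk.support_concat, List.mem_append,
            List.mem_singleton] at hx
          rcases hx with hx | rfl
          · exact Or.inr (Or.inr ⟨hwB0 x hx, RA.trans hxBra (RA_all wB0 hwB0 x hx)⟩)
          · exact Or.inr (Or.inl rfl))
  -- interior vertices
  have hAint : ∀ (i : ℕ) (hi : i < LA.length), 0 < i → i < LA.length - 1 → QA LA[i] := by
    intro i hi h0 hl
    rcases hAmem _ (LA.getElem_mem hi) with h | h | h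
    · exact absurd (hAnd.getElem_inj_iff.1 (h.trans hA0.symm)) (by omega)
    · rw [← hAlast] at h
      exact absurd (hAnd.getElem_inj_iff.1 h) (by omega)
    · exact h
  have hBint : ∀ (i : ℕ) (hi : i < LB.length), 0 < i → i < LB.length - 1 → QB LB[i] := by
    intro i hi h0 hl
    rcases hBmem _ (LB.getElem_mem hi) with h | h | h
    · exact absurd (hBnd.getElem_inj_iff.1 (h.trans hB0.symm)) (by omega)
    · rw [← hBlast] at h
      exact absurd (hBnd.getElem_inj_iff.1 h) (by omega)
    · exact h
  -- the reversed interior of LB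
  set M : List V := ((LB.drop 1).dropLast).reverse with hMdef
  have getElemEq : ∀ (X Y : List V) (h : X = Y) (t : ℕ) (ht : t < X.length),
      X[t] = Y[t]'(h ▸ ht) := by
    intro X Y h t ht
    subst h
    rfl
  have hMlen : M.length = LB.length - 2 := by
    rw [hMdef]
    simp
    omega
  have hMget : ∀ (t : ℕ) (ht : t < M.length), M[t] = LB[LB.length - 2 - t]'(by omega) := by
    intro t ht
    have ht' := ht
    rw [hMlen] at ht'
    rw [getElemEq M ((LB.drop 1).dropLast).reverse hMdef t ht,
      List.getElem_reverse, List.getElem_dropLast, List.getElem_drop]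
    exact getElemc LB (by simp; omega) _
  have hMQ : ∀ x ∈ M, QB x := by
    intro x hx
    obtain ⟨t, ht, hxe⟩ := List.getElem_of_mem hx
    rw [← hxe, hMget t ht]
    exact hBint _ (by omega) (by omega) (by omega)
  have hM1 : 1 ≤ M.length := by omega
  have hCl : (LA ++ M).length = LA.length + M.length := List.length_append
  have hCleft : ∀ (i : ℕ) (hi : i < LA.length),
      (LA ++ M)[i]'(by omega) = LA[i] := by
    intro i hi
    exact List.getElem_append_left hi
  have hCright : ∀ (i : ℕ) (h1 : LA.length ≤ i) (h2 : i < LA.length + M.length),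
      (LA ++ M)[i]'(by omega) = M[i - LA.length]'(by omega) := by
    intro i h1 h2
    exact List.getElem_append_right h1
  -- the four cycle hypotheses
  have hCnd : (LA ++ M).Nodup := by
    refine hAnd.append ?_ ?_
    · rw [hMdef]
      exact List.nodup_reverse.2
        (List.Nodup.sublist ((List.dropLast_sublist _).trans (List.drop_sublist _ _)) hBnd)
    · rw [List.disjoint_left]
      intro x hxA hxM
      have hQBx := hMQ x hxM
      rcases hAmem x hxA with h | h | h
      · exact hQBx.1 (h ▸ hS0)
      · exact hQBx.1 (h ▸ hS2)
      · exact disj x h hQBx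
  have hCchain : ∀ (i : ℕ) (h : i + 1 < (LA ++ M).length),
      G.Adj ((LA ++ M)[i]'(by omega)) ((LA ++ M)[i+1]'h) := by
    intro i h
    rw [hCl] at h
    rcases lt_trichotomy (i + 1) LA.length with hlt | heq | hgt
    · rw [hCleft i (by omega), hCleft (i+1) hlt]
      exact hAchain i hlt
    · rw [hCleft i (by omega), hCright (i+1) (by omega) (by omega)]
      have e1 : LA[i]'(by omega) = f 2 := by
        rw [← hAlast]
        exact getElemc LA (by omega) _
      have e2 : M[i + 1 - LA.length]'(by omega) = LB[LB.length - 2]'(by omega) := by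
        rw [hMget (i + 1 - LA.length) (by omega)]
        exact getElemc LB (by omega) _
      rw [e1, e2]
      have hb := hBchain (LB.length - 2) (by omega)
      rw [getElemc LB (show LB.length - 2 + 1 = LB.length - 1 by omega), hBlast] at hb
      exact hb.symm
    · have hgA : LA.length ≤ i := by omega
      rw [hCright i hgA (by omega), hCright (i+1) (by omega) (by omega)]
      rw [hMget (i - LA.length) (by omega), hMget (i + 1 - LA.length) (by omega)]
      have hb := hBchain (LB.length - 2 - (i + 1 - LA.length)) (by omega)
      rw [getElemc LB (show LB.length - 2 - (i + 1 - LA.length) + 1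
        = LB.length - 2 - (i - LA.length) by omega)] at hb
      exact hb.symm
  have hCwrap : G.Adj ((LA ++ M)[(LA ++ M).length - 1]'(by omega))
      ((LA ++ M)[0]'(by omega)) := by
    rw [hCleft 0 (by omega), hA0, hCright ((LA ++ M).length - 1) (by omega) (by omega)]
    rw [hMget ((LA ++ M).length - 1 - LA.length) (by omega)]
    rw [getElemc LB (show LB.length - 2 - ((LA ++ M).length - 1 - LA.length) = 1 by omega)]
    rw [← hB0]
    exact (hBchain 0 (by omega)).symm
  have hCchord : ∀ (i j2 : ℕ) (hj2 : j2 < (LA ++ M).length) (hij : i < j2),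
      G.Adj ((LA ++ M)[i]'(by omega)) ((LA ++ M)[j2]'hj2) →
      j2 = i + 1 ∨ (i = 0 ∧ j2 = (LA ++ M).length - 1) := by
    intro i j2 hj2 hij hAdj
    rw [hCl] at hj2
    by_cases hjA : j2 < LA.length
    · left
      rw [hCleft i (by omega), hCleft j2 hjA] at hAdj
      by_contra hne'
      exact hAchord i j2 hjA (by omega) hAdj
    · have hjM : LA.length ≤ j2 := by omega
      rw [hCright j2 hjM (by omega), hMget (j2 - LA.length) (by omega)] at hAdj
      set q := LB.length - 2 - (j2 - LA.length) with hqdef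
      have hq1 : 1 ≤ q := by omega
      have hq2 : q ≤ LB.length - 2 := by omega
      by_cases hiA : i < LA.length
      · by_cases hi0 : i = 0
        · subst hi0
          rw [hCleft 0 (by omega), hA0, ← hB0] at hAdj
          have hq1' : q = 1 := by
            by_contra hq
            exact hBchord 0 q (by omega) (by omega) hAdj
          right
          refine ⟨rfl, ?_⟩
          omega
        · by_cases hilast : i = LA.length - 1
          · rw [hCleft i (by omega)] at hAdj
            have e : LA[i]'(by omega) = f 2 := by
              rw [← hAlast]
              exact getElemc LA (by omega) _
            rw [e, ← hBlast] at hAdj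
            have : q = LB.length - 2 := by
              by_contra hq
              exact hBchord q (LB.length - 1) (by omega) (by omega) hAdj.symm
            left
            omega
          · exfalso
            rw [hCleft i (by omega)] at hAdj
            exact noAB _ _ (hAint i (by omega) (by omega) (by omega))
              (hBint q (by omega) (by omega) (by omega)) hAdj
      · have hiM : LA.length ≤ i := by omega
        rw [hCright i hiM (by omega), hMget (i - LA.length) (by omega)] at hAdj
        set p := LB.length - 2 - (i - LA.length) with hpdef
        have : p = q + 1 := by
          by_contra hpq
          exact hBchord q p (by omega) (by omega) hAdj.symm
        left
        omega
  by_cases h5 : 5 ≤ (LA ++ M).length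
  · exact hac.1 ⟨(LA ++ M).length, fun k => (LA ++ M).getD k.val (f 0), h5,
      cycle_of_list (LA ++ M) _ rfl (by omega) (f 0) hCnd hCchain hCwrap hCchord⟩
  · have hn4 : (LA ++ M).length = 4 := by omega
    have hg := cycle_of_list (G := G) (LA ++ M) 4 hn4 (by omega) (f 0)
      hCnd hCchain hCwrap hCchord
    set g : ZMod 4 → V := fun k => (LA ++ M).getD k.val (f 0) with hgdef
    have hgval : ∀ k : ZMod 4, k.val < (LA ++ M).length := by
      intro k
      rw [hn4]
      exact ZMod.val_lt k
    have hgmem : ∀ k : ZMod 4, g k ∈ LA ++ M := by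
      intro k
      rw [hgdef]
      simp only []
      rw [List.getD_eq_getElem _ _ (hgval k)]
      exact List.getElem_mem _
    have hg0 : g 0 = f 0 := by
      rw [hgdef]
      simp only []
      rw [show (0 : ZMod 4).val = 0 from rfl, List.getD_eq_getElem _ _ (by omega),
        hCleft 0 (by omega), hA0]
    have hg2 : g 2 = f 2 := by
      rw [hgdef]
      simp only []
      rw [show (2 : ZMod 4).val = 2 from rfl, List.getD_eq_getElem _ _ (by omega),
        hCleft 2 (by omega), ← hAlast]
      exact getElemc LA (by omega) _
    have hmemC : ∀ x ∈ LA ++ M, x = f 0 ∨ x = f 2 ∨ QA x ∨ QB x := by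
      intro x hx
      rcases List.mem_append.1 hx with hx | hx
      · rcases hAmem x hx with h | h | h
        · exact Or.inl h
        · exact Or.inr (Or.inl h)
        · exact Or.inr (Or.inr (Or.inl h))
      · exact Or.inr (Or.inr (Or.inr (hMQ x hx)))
    have hne_rg : Set.range f ≠ Set.range g := by
      intro hEq
      have hf1 : f 1 ∈ Set.range g := hEq ▸ Set.mem_range_self 1
      obtain ⟨k, hk⟩ := hf1
      have hkC : f 1 ∈ LA ++ M := hk ▸ hgmem k
      rcases hmemC _ hkC with h | h | h | h
      · exact h10 h
      · exact h12 h
      · exact h.1 hS1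
      · exact h.1 hS1
    have hsub := hac.2.2 (Set.range f) (Set.range g) ⟨f, hcyc, rfl⟩ ⟨g, hg, rfl⟩ hne_rg
    exact h02 (hsub ⟨⟨0, rfl⟩, ⟨0, hg0⟩⟩ ⟨⟨2, rfl⟩, ⟨2, hg2⟩⟩)
end

section
/- Let G be a k-connected almost-chordal graph and let C = {v_1, v_2, v_3, v_4} be the vertex set of an induced 4-cycle in G with v_1v_2 an edge of this cycle. Then the graph G' = G/v_1v_2 obtained from G by contracting the edge v_1v_2 is still k-connected. -/
set_option maxHeartbeats 1000000

open SimpleGraph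

variable {V : Type*}

/-! ### Auxiliary material -/

section Aux

/-- A concrete 4-cycle enumeration. -/
def cyc4 (a b c d : V) : ZMod 4 → V := fun i =>
  if i = 0 then a else if i = 1 then b else if i = 2 then c else d

lemma cyc4_zero (a b c d : V) : cyc4 a b c d 0 = a := rfl
lemma cyc4_one (a b c d : V) : cyc4 a b c d 1 = b := by
  rw [cyc4]; rw [if_neg (by decide), if_pos rfl]
lemma cyc4_two (a b c d : V) : cyc4 a b c d 2 = c := by
  rw [cyc4]; rw [if_neg (by decide), if_neg (by decide), if_pos rfl]
lemma cyc4_three (a b c d : V) : cyc4 a b c d 3 = d := by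
  rw [cyc4]; rw [if_neg (by decide), if_neg (by decide), if_neg (by decide)]

lemma zmod4_cases : ∀ i : ZMod 4, i = 0 ∨ i = 1 ∨ i = 2 ∨ i = 3 := by decide

lemma mem_range_cyc4 {a b c d z : V} :
    z ∈ Set.range (cyc4 a b c d) ↔ (z = a ∨ z = b ∨ z = c ∨ z = d) := by
  constructor
  · rintro ⟨i, rfl⟩
    rcases zmod4_cases i with h | h | h | h <;> subst h <;>
      simp [cyc4_zero, cyc4_one, cyc4_two, cyc4_three]
  · rintro (rfl | rfl | rfl | rfl)
    · exact ⟨0, cyc4_zero _ _ _ _⟩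
    · exact ⟨1, cyc4_one _ _ _ _⟩
    · exact ⟨2, cyc4_two _ _ _ _⟩
    · exact ⟨3, cyc4_three _ _ _ _⟩

lemma isInducedCycle_of (G : SimpleGraph V) {a b c d : V}
    (hab : G.Adj a b) (hbc : G.Adj b c) (hcd : G.Adj c d) (hda : G.Adj d a)
    (hac : ¬G.Adj a c) (hbd : ¬G.Adj b d) (hac' : a ≠ c) (hbd' : b ≠ d) :
    IsInducedCycle G (cyc4 a b c d) := by
  have h1 : a ≠ b := G.ne_of_adj hab
  have h2 : b ≠ c := G.ne_of_adj hbc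
  have h3 : c ≠ d := G.ne_of_adj hcd
  have h4 : d ≠ a := G.ne_of_adj hda
  have h1' := h1.symm; have h2' := h2.symm; have h3' := h3.symm; have h4' := h4.symm
  have hac'' := hac'.symm; have hbd'' := hbd'.symm
  have e1 := hab.symm; have e2 := hbc.symm; have e3 := hcd.symm; have e4 := hda.symm
  have n1 : ¬ G.Adj c a := fun h => hac h.symm
  have n2 : ¬ G.Adj d b := fun h => hbd h.symm
  have hirr : ∀ x : V, ¬ G.Adj x x := fun x => G.loopless.irrefl x
  constructor
  · intro i j h
    rcases zmod4_cases i with hi | hi | hi | hi <;> rcases zmod4_cases j with hj | hj | hj | hj <;>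
      subst hi <;> subst hj <;>
      simp only [cyc4_zero, cyc4_one, cyc4_two, cyc4_three] at h ⊢ <;>
      first
        | rfl
        | exact absurd h (by assumption)
  · intro i j
    rcases zmod4_cases i with hi | hi | hi | hi <;> rcases zmod4_cases j with hj | hj | hj | hj <;>
      subst hi <;> subst hj <;>
      simp only [cyc4_zero, cyc4_one, cyc4_two, cyc4_three] <;>
      first
        | exact iff_of_false (hirr _) (by decide)
        | exact iff_of_true (by assumption) (by decide)
        | exact iff_of_false (by assumption) (by decide)

lemma zmod_succ_val {n : ℕ} [NeZero n] (hn1 : 1 < n) (i : ZMod n) :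
    (i + 1).val = (i.val + 1) % n := by
  haveI : Fact (1 < n) := ⟨hn1⟩
  rw [ZMod.val_add, ZMod.val_one]

lemma hasHole_of_geodesic (G : SimpleGraph V) {u v : V} (huv : G.Adj u v)
    (L : ℕ) (hL : 4 ≤ L) (q : ℕ → V)
    (h0 : q 0 = u) (hLv : q L = v)
    (hstep : ∀ i, i < L → G.Adj (q i) (q (i+1)))
    (hinj : ∀ i j, i ≤ L → j ≤ L → q i = q j → i = j)
    (hchord : ∀ i j, i + 2 ≤ j → j ≤ L → ¬(i = 0 ∧ j = L) → ¬ G.Adj (q i) (q j)) :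
    HasHole G := by
  set n := L + 1 with hn
  haveI : NeZero n := ⟨Nat.succ_ne_zero L⟩
  have hn1 : 1 < n := by omega
  refine ⟨n, fun i => q i.val, by omega, ?_, ?_⟩
  · intro i j h
    have := hinj i.val j.val (by have := ZMod.val_lt i; omega) (by have := ZMod.val_lt j; omega) h
    exact ZMod.val_injective n this
  · have hkey : ∀ a b : ZMod n, a.val < b.val →
        (G.Adj (q a.val) (q b.val) ↔ (b = a + 1 ∨ a = b + 1)) := by
      intro a b hab
      have ha := ZMod.val_lt a
      have hb := ZMod.val_lt b
      constructor
      · intro hadj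
        rcases Nat.lt_or_ge (a.val + 1) b.val with h1 | h1
        · by_cases hc : a.val = 0 ∧ b.val = L
          · right
            apply ZMod.val_injective
            rw [zmod_succ_val hn1]
            have hbn : b.val + 1 = n := by omega
            rw [hbn, Nat.mod_self]
            omega
          · exact absurd hadj (hchord a.val b.val (by omega) (by omega) (by omega))
        · left
          apply ZMod.val_injective
          rw [zmod_succ_val hn1, Nat.mod_eq_of_lt (by omega)]
          omega
      · rintro (h | h)
        · have hv : b.val = (a.val + 1) % n := by rw [h, zmod_succ_val hn1]
          rcases Nat.lt_or_ge (a.val + 1) n with h2 | h2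
          · rw [Nat.mod_eq_of_lt h2] at hv
            rw [hv]
            exact hstep a.val (by omega)
          · exfalso
            have hbn : a.val + 1 = n := by omega
            rw [hbn, Nat.mod_self] at hv
            omega
        · have hv : a.val = (b.val + 1) % n := by rw [h, zmod_succ_val hn1]
          rcases Nat.lt_or_ge (b.val + 1) n with h2 | h2
          · exfalso
            rw [Nat.mod_eq_of_lt h2] at hv
            omega
          · have hbn : b.val + 1 = n := by omega
            rw [hbn, Nat.mod_self] at hv
            have hbL : b.val = L := by omega
            rw [hv, hbL, h0, hLv]
            exact huv
    intro i j
    rcases Nat.lt_trichotomy i.val j.val with h | h | h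
    · exact hkey i j h
    · have hij : i = j := ZMod.val_injective n h
      subst hij
      constructor
      · intro hadj; exact absurd hadj (G.loopless.irrefl _)
      · rintro (h | h) <;>
        · have h' := congrArg ZMod.val h
          have hvi := ZMod.val_lt i
          rw [zmod_succ_val hn1] at h'
          rcases Nat.lt_or_ge (i.val + 1) n with h2 | h2
          · rw [Nat.mod_eq_of_lt h2] at h'; omega
          · have hbn : i.val + 1 = n := by omega
            rw [hbn, Nat.mod_self] at h'
            omega
    · have := hkey j i h
      rw [G.adj_comm] at this
      rw [this]
      tauto

namespace SimpleGraph.Walk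
variable {G : SimpleGraph V}

def takeW {u v : V} : (p : G.Walk u v) → (n : ℕ) → G.Walk u (p.getVert n)
  | .nil, _ => .nil
  | .cons _ _, 0 => .nil
  | .cons h q, n+1 => .cons h (takeW q n)

def dropW {u v : V} : (p : G.Walk u v) → (n : ℕ) → G.Walk (p.getVert n) v
  | .nil, _ => .nil
  | .cons h q, 0 => .cons h q
  | .cons _ q, n+1 => dropW q n

lemma length_takeW {u v : V} : (p : G.Walk u v) → (n : ℕ) → (p.takeW n).length = min n p.length
  | .nil, n => by simp [takeW]
  | .cons h q, 0 => by simp [takeW]; rfl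
  | .cons h q, n+1 => by
      show (q.takeW n).length + 1 = min (n+1) (q.length+1); rw [length_takeW q n]
      omega

lemma length_dropW {u v : V} : (p : G.Walk u v) → (n : ℕ) → (p.dropW n).length = p.length - n
  | .nil, n => by simp [dropW]
  | .cons h q, 0 => by simp [dropW]; rfl
  | .cons h q, n+1 => by
      show (q.dropW n).length = (q.length + 1) - (n+1); rw [length_dropW q n]
      omega

lemma getVert_mem_support' {u v : V} : (p : G.Walk u v) → (n : ℕ) → p.getVert n ∈ p.support
  | .nil, _ => by simp [getVert]
  | .cons h q, 0 => by simp [getVert]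
  | .cons h q, n+1 => by
      simp only [support_cons, List.mem_cons]
      exact Or.inr (getVert_mem_support' q n)

lemma IsPath.getVert_inj {u v : V} {p : G.Walk u v} (hp : p.IsPath) :
    ∀ {i j : ℕ}, i ≤ p.length → j ≤ p.length → p.getVert i = p.getVert j → i = j := by
  induction p with
  | nil => intro i j hi hj _; simp at hi hj; omega
  | @cons a b c h q ih =>
    rw [cons_isPath_iff] at hp
    intro i j hi hj hij
    match i, j with
    | 0, 0 => rfl
    | 0, j+1 =>
      exfalso
      have h0 : a = q.getVert j := hij
      exact hp.2 (h0 ▸ getVert_mem_support' q j)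
    | i+1, 0 =>
      exfalso
      have h0 : a = q.getVert i := hij.symm
      exact hp.2 (h0 ▸ getVert_mem_support' q i)
    | i+1, j+1 =>
      simp only [length_cons] at hi hj
      have := ih hp.1 (by omega) (by omega) hij
      omega

end SimpleGraph.Walk

lemma tri_or_c4 (G : SimpleGraph V) (hhole : ¬HasHole G) {u v : V} (huv : G.Adj u v)
    (Ω : Set V) (hu : u ∈ Ω) (hv : v ∈ Ω)
    (hreach : ((G.deleteEdges {s(u,v)}).induce Ω).Reachable ⟨u,hu⟩ ⟨v,hv⟩) :
    (∃ x ∈ Ω, x ≠ u ∧ x ≠ v ∧ G.Adj u x ∧ G.Adj x v) ∨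
    (∃ x ∈ Ω, ∃ y ∈ Ω, x ≠ u ∧ x ≠ v ∧ y ≠ u ∧ y ≠ v ∧ x ≠ y ∧
      G.Adj u x ∧ G.Adj x y ∧ G.Adj y v ∧ ¬G.Adj u y ∧ ¬G.Adj x v) := by
  classical
  set K := (G.deleteEdges {s(u,v)}).induce Ω with hK
  obtain ⟨p, hp, hlen⟩ := hreach.exists_path_of_dist
  set L := p.length with hLdef
  set q : ℕ → V := fun i => (p.getVert i).1 with hq
  have hmem : ∀ i, q i ∈ Ω := fun i => (p.getVert i).2
  have h0 : q 0 = u := congrArg Subtype.val p.getVert_zero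
  have hLv : q L = v := congrArg Subtype.val p.getVert_length
  have hKadj : ∀ a b : Ω, K.Adj a b ↔
      (G.Adj a.1 b.1 ∧ ¬ s(a.1, b.1) ∈ ({s(u,v)} : Set (Sym2 V))) := by
    intro a b
    rw [hK]
    exact SimpleGraph.deleteEdges_adj
  have hstep : ∀ i, i < L → G.Adj (q i) (q (i+1)) := by
    intro i hi
    have := p.adj_getVert_succ hi
    rw [hKadj] at this
    exact this.1
  have hinj : ∀ i j, i ≤ L → j ≤ L → q i = q j → i = j := by
    intro i j hi hj hij
    exact hp.getVert_inj hi hj (Subtype.ext hij)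
  have hchord : ∀ i j, i + 2 ≤ j → j ≤ L → ¬(i = 0 ∧ j = L) → ¬ G.Adj (q i) (q j) := by
    intro i j hij hjL hne hadj
    have hne2 : ¬ s(q i, q j) = s(u, v) := by
      rw [Sym2.eq_iff]
      rintro (⟨h1, h2⟩ | ⟨h1, h2⟩)
      · exact hne ⟨hinj i 0 (by omega) (by omega) (by rw [h0, h1]),
          hinj j L (by omega) (by omega) (by rw [hLv, h2])⟩
      · have : i = L := hinj i L (by omega) (by omega) (by rw [hLv, h1])
        omega
    have hK2 : K.Adj (p.getVert i) (p.getVert j) := by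
      rw [hKadj]
      exact ⟨hadj, by simpa using hne2⟩
    have hdist := SimpleGraph.dist_le ((p.takeW i).append (SimpleGraph.Walk.cons hK2 (p.dropW j)))
    rw [SimpleGraph.Walk.length_append, SimpleGraph.Walk.length_cons,
      SimpleGraph.Walk.length_takeW, SimpleGraph.Walk.length_dropW, ← hlen] at hdist
    have hmin : min i p.length = i := by omega
    rw [hmin] at hdist
    omega
  rcases Nat.lt_or_ge L 4 with hL4 | hL4
  · rcases (by omega : L = 0 ∨ L = 1 ∨ L = 2 ∨ L = 3) with h | h | h | h
    · exfalso
      rw [h] at hLv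
      rw [h0] at hLv
      exact huv.ne hLv
    · exfalso
      have hadj := p.adj_getVert_succ (show 0 < p.length by omega)
      have h1 : p.getVert 1 = ⟨v, hv⟩ := by
        rw [show (1:ℕ) = p.length by omega]
        exact p.getVert_length
      rw [p.getVert_zero, h1] at hadj
      rw [hKadj] at hadj
      exact hadj.2 (Set.mem_singleton _)
    · rw [h] at hLv
      left
      refine ⟨q 1, hmem 1, ?_, ?_, ?_, ?_⟩
      · intro hx; have := hinj 1 0 (by omega) (by omega) (by rw [hx, h0]); omega
      · intro hx; have := hinj 1 2 (by omega) (by omega) (by rw [hx, ← hLv]); omega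
      · have := hstep 0 (by omega); rwa [h0] at this
      · have := hstep 1 (by omega); rwa [show (1+1 : ℕ) = 2 from rfl, hLv] at this
    · rw [h] at hLv
      right
      refine ⟨q 1, hmem 1, q 2, hmem 2, ?_, ?_, ?_, ?_, ?_, ?_, ?_, ?_, ?_, ?_⟩
      · intro hx; have := hinj 1 0 (by omega) (by omega) (by rw [hx, h0]); omega
      · intro hx; have := hinj 1 3 (by omega) (by omega) (by rw [hx, ← hLv]); omega
      · intro hx; have := hinj 2 0 (by omega) (by omega) (by rw [hx, h0]); omega
      · intro hx; have := hinj 2 3 (by omega) (by omega) (by rw [hx, ← hLv]); omega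
      · intro hx; have := hinj 1 2 (by omega) (by omega) hx; omega
      · have := hstep 0 (by omega); rwa [h0] at this
      · exact hstep 1 (by omega)
      · have := hstep 2 (by omega); rwa [show (2+1 : ℕ) = 3 from rfl, hLv] at this
      · have := hchord 0 2 (by omega) (by omega) (by omega)
        rwa [h0] at this
      · have := hchord 1 3 (by omega) (by omega) (by omega)
        rwa [hLv] at this
  · exact absurd (hasHole_of_geodesic G huv L hL4 q h0 hLv hstep hinj hchord) hhole

lemma exists_adj_reach [Fintype V] [DecidableEq V] {k : ℕ} (G : SimpleGraph V)
    (hconn : KConnected k G) (W : Finset V) (hWk : W.card ≤ k) {w : V} (hw : w ∈ W)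
    {a b : ((↑W : Set V)ᶜ : Set V)} (hab : ¬ (G.induce ((↑W : Set V)ᶜ)).Reachable a b)
    (x : ((↑W : Set V)ᶜ : Set V)) :
    ∃ y : ((↑W : Set V)ᶜ : Set V), G.Adj w y.1 ∧ (G.induce ((↑W : Set V)ᶜ)).Reachable x y := by
  by_contra hno
  push_neg at hno
  have hmemW : ∀ z : V, z ∈ ((↑W : Set V)ᶜ) ↔ z ∉ W := by intro z; simp
  set W₀ : Finset V := W.erase w with hW₀
  have hcard : W₀.card < k := by
    have h1 : W₀.card = W.card - 1 := Finset.card_erase_of_mem hw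
    have h2 : 0 < W.card := Finset.card_pos.mpr ⟨w, hw⟩
    omega
  have hconn₀ := (hconn.2 W₀ hcard).preconnected
  have hsub : ((↑W : Set V)ᶜ) ⊆ ((↑W₀ : Set V)ᶜ) := by
    intro z hz
    simp only [Set.mem_compl_iff, Finset.mem_coe] at hz ⊢
    intro hzW₀
    exact hz (Finset.mem_of_mem_erase hzW₀)
  have hmemW₀ : ∀ z : V, z ∈ ((↑W₀ : Set V)ᶜ) → z ≠ w → z ∈ ((↑W : Set V)ᶜ) := by
    intro z hz hzw
    rw [hmemW]
    intro hzW
    exact (by simpa using hz : z ∉ W₀) (Finset.mem_erase.mpr ⟨hzw, hzW⟩)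
  have lift : ∀ (s t : ((↑W₀ : Set V)ᶜ : Set V)) (p : (G.induce ((↑W₀ : Set V)ᶜ)).Walk s t)
      (hs : s.1 ∈ ((↑W : Set V)ᶜ)) (ht : t.1 ∈ ((↑W : Set V)ᶜ)),
      (G.induce ((↑W : Set V)ᶜ)).Reachable ⟨s.1, hs⟩ ⟨t.1, ht⟩ ∨
      ∃ y : ((↑W : Set V)ᶜ : Set V), G.Adj w y.1 ∧
        (G.induce ((↑W : Set V)ᶜ)).Reachable ⟨s.1, hs⟩ y := by
    intro s t p
    induction p with
    | nil => intro hs ht; left; rfl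
    | @cons s s₁ t hadj p ih =>
      intro hs ht
      by_cases h1 : s₁.1 = w
      · right
        refine ⟨⟨s.1, hs⟩, ?_, Reachable.refl _⟩
        have : G.Adj s.1 s₁.1 := hadj
        rw [h1] at this
        exact this.symm
      · have hs₁ : s₁.1 ∈ ((↑W : Set V)ᶜ) := hmemW₀ s₁.1 s₁.2 h1
        have hedge : (G.induce ((↑W : Set V)ᶜ)).Adj ⟨s.1, hs⟩ ⟨s₁.1, hs₁⟩ := hadj
        rcases ih hs₁ ht with hr | ⟨y, hy1, hy2⟩
        · exact Or.inl (hedge.reachable.trans hr)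
        · exact Or.inr ⟨y, hy1, hedge.reachable.trans hy2⟩
  have hz : ∃ z : ((↑W : Set V)ᶜ : Set V), ¬ (G.induce ((↑W : Set V)ᶜ)).Reachable x z := by
    by_contra hcon
    push_neg at hcon
    exact hab ((hcon a).symm.trans (hcon b))
  obtain ⟨z, hz⟩ := hz
  obtain ⟨p⟩ := hconn₀ ⟨x.1, hsub x.2⟩ ⟨z.1, hsub z.2⟩
  rcases lift _ _ p x.2 z.2 with hr | ⟨y, hy1, hy2⟩
  · exact hz hr
  · exact hno y hy1 hy2

lemma reach_transfer (G : SimpleGraph V) (u v : V) (W : Finset V)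
    (hu : u ∈ W) (hv : v ∈ W) (Ω : Set V) (c : ((↑W : Set V)ᶜ : Set V))
    (hΩ : ∀ z : ((↑W : Set V)ᶜ : Set V),
      (G.induce ((↑W : Set V)ᶜ)).Reachable c z → z.1 ∈ Ω) :
    ∀ (s t : ((↑W : Set V)ᶜ : Set V)) (p : (G.induce ((↑W : Set V)ᶜ)).Walk s t)
      (hcs : (G.induce ((↑W : Set V)ᶜ)).Reachable c s)
      (hsm : s.1 ∈ Ω) (htm : t.1 ∈ Ω),
      ((G.deleteEdges {s(u,v)}).induce Ω).Reachable ⟨s.1, hsm⟩ ⟨t.1, htm⟩ := by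
  intro s t p
  induction p with
  | nil => intro _ _ _; exact Reachable.refl _
  | @cons s s₁ t hadj p ih =>
    intro hcs hsm htm
    have hGadj : G.Adj s.1 s₁.1 := hadj
    have hedge : (G.induce ((↑W : Set V)ᶜ)).Adj s s₁ := hadj
    have hcs₁ : (G.induce ((↑W : Set V)ᶜ)).Reachable c s₁ := hcs.trans hedge.reachable
    have hs₁m : s₁.1 ∈ Ω := hΩ s₁ hcs₁
    have hne2 : ¬ s(s.1, s₁.1) = s(u, v) := by
      rw [Sym2.eq_iff]
      have hsW : s.1 ∉ W := s.2
      rintro (⟨h1, h2⟩ | ⟨h1, h2⟩)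
      · exact hsW (h1 ▸ hu)
      · exact hsW (h1 ▸ hv)
    have hKedge : ((G.deleteEdges {s(u,v)}).induce Ω).Adj ⟨s.1, hsm⟩ ⟨s₁.1, hs₁m⟩ := by
      refine (SimpleGraph.deleteEdges_adj).mpr ⟨hGadj, by simpa using hne2⟩
    exact hKedge.reachable.trans (ih hcs₁ hs₁m htm)

end Aux

/-- Contracting an edge of an induced 4-cycle of a `k`-connected almost-chordal graph
preserves `k`-connectivity (STATEMENT 11). -/
theorem almost_chordal_contraction_connectivity [Fintype V] [DecidableEq V]
    (k : ℕ) (G : SimpleGraph V)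
    (hconn : KConnected k G) (hac : AlmostChordal G)
    (f : ZMod 4 → V) (hf : IsInducedCycle G f) :
    KConnected k (contractEdge G (f 0) (f 1)) := by
  classical
  obtain ⟨finj, fadj⟩ := hf
  have hne : ∀ i j : ZMod 4, i ≠ j → f i ≠ f j := fun i j hij h => hij (finj h)
  have huv : G.Adj (f 0) (f 1) := (fadj 0 1).mpr (by decide)
  have h12 : G.Adj (f 1) (f 2) := (fadj 1 2).mpr (by decide)
  have h23 : G.Adj (f 2) (f 3) := (fadj 2 3).mpr (by decide)
  have h30 : G.Adj (f 3) (f 0) := (fadj 3 0).mpr (by decide)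
  have n02 : ¬ G.Adj (f 0) (f 2) := fun h => absurd ((fadj 0 2).mp h) (by decide)
  have n13 : ¬ G.Adj (f 1) (f 3) := fun h => absurd ((fadj 1 3).mp h) (by decide)
  have hrangef : ∀ z : V, z ∈ Set.range f ↔ (z = f 0 ∨ z = f 1 ∨ z = f 2 ∨ z = f 3) := by
    intro z
    constructor
    · rintro ⟨i, rfl⟩
      rcases zmod4_cases i with h | h | h | h <;> subst h <;> tauto
    · rintro (rfl | rfl | rfl | rfl)
      exacts [⟨0, rfl⟩, ⟨1, rfl⟩, ⟨2, rfl⟩, ⟨3, rfl⟩]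
  -- the graph has at least k+2 vertices
  have hcardV : k + 1 < Fintype.card V := by
    by_contra hle
    push_neg at hle
    have hk := hconn.1
    have hcard4 : 4 ≤ Fintype.card V := by
      have := Fintype.card_le_of_injective f finj
      rwa [ZMod.card] at this
    set S : Finset V := (Finset.univ.erase (f 0)).erase (f 2) with hS
    have hcS : S.card < k := by
      have e1 : (Finset.univ.erase (f 0)).card = Fintype.card V - 1 := by
        rw [Finset.card_erase_of_mem (Finset.mem_univ _), Finset.card_univ]
      have e2 : S.card = Fintype.card V - 2 := by
        rw [hS, Finset.card_erase_of_mem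
          (Finset.mem_erase.mpr ⟨hne 2 0 (by decide), Finset.mem_univ _⟩), e1]
        omega
      omega
    have hrc := (hconn.2 S hcS).preconnected
    have hSmem : ∀ z : V, z ∈ ((↑S : Set V)ᶜ) ↔ (z = f 2 ∨ z = f 0) := by
      intro z
      simp only [Set.mem_compl_iff, Finset.mem_coe, hS, Finset.mem_erase, Finset.mem_univ,
        and_true, not_and, not_not]
      constructor
      · intro h
        by_cases h2 : z = f 2
        · exact Or.inl h2
        · exact Or.inr (h h2)
      · intro h h2
        rcases h with h | h
        · exact absurd h h2
        · exact h
    have hm0 : f 0 ∈ ((↑S : Set V)ᶜ) := (hSmem _).mpr (Or.inr rfl)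
    have hm2 : f 2 ∈ ((↑S : Set V)ᶜ) := (hSmem _).mpr (Or.inl rfl)
    have hnoadj : ∀ (c d : (((↑S : Set V)ᶜ : Set V))), ¬ (G.induce ((↑S : Set V)ᶜ)).Adj c d := by
      rintro ⟨c, hc⟩ ⟨d, hd⟩ hcd
      have hc' := (hSmem c).mp hc
      have hd' := (hSmem d).mp hd
      have : G.Adj c d := hcd
      rcases hc' with rfl | rfl <;> rcases hd' with rfl | rfl
      · exact G.loopless.irrefl _ this
      · exact n02 this.symm
      · exact n02 this
      · exact G.loopless.irrefl _ this
    have hbot : (G.induce ((↑S : Set V)ᶜ)) = ⊥ := by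
      ext c d
      simp only [SimpleGraph.bot_adj, iff_false]
      exact hnoadj c d
    have hr := hrc ⟨f 0, hm0⟩ ⟨f 2, hm2⟩
    rw [hbot] at hr
    have := SimpleGraph.reachable_bot.mp hr
    exact hne 0 2 (by decide) (congrArg Subtype.val this)
  have hcardV' : Fintype.card {x : V // x ≠ f 1} = Fintype.card V - 1 := by
    have h1 : Fintype.card {x : V // x = f 1} = 1 := Fintype.card_subtype_eq (f 1)
    have h2 := Fintype.card_subtype_compl (fun x : V => x = f 1)
    rw [h1] at h2
    simpa using h2
  constructor
  · omega
  · intro S' hS'k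
    rw [SimpleGraph.connected_iff]
    have hex : ∃ z : {x : V // x ≠ f 1}, z ∉ S' := by
      by_contra hcon
      push_neg at hcon
      have : Finset.univ ⊆ S' := fun z _ => hcon z
      have := Finset.card_le_card this
      rw [Finset.card_univ] at this
      omega
    obtain ⟨z₀, hz₀⟩ := hex
    refine ⟨?_, ⟨⟨z₀, hz₀⟩⟩⟩
    by_contra hnp
    rw [SimpleGraph.Preconnected] at hnp
    push_neg at hnp
    obtain ⟨a, b, hab⟩ := hnp
    -- the lifted removed set
    set W : Finset V := S'.image Subtype.val ∪ {f 1} with hW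
    have hWk : W.card ≤ k := by
      have h1 := Finset.card_union_le (S'.image Subtype.val) ({f 1} : Finset V)
      have h2 := Finset.card_image_le (f := Subtype.val) (s := S')
      simp only [Finset.card_singleton] at h1
      rw [hW]
      omega
    have hvW : f 1 ∈ W := by simp [hW]
    have hW1 : ∀ z : V, z ∉ W → z ≠ f 1 := by
      intro z hz h
      exact hz (h ▸ hvW)
    have hW2 : ∀ (z : {x : V // x ≠ f 1}), z.1 ∉ W → z ∉ S' := by
      intro z hz hzS
      apply hz
      rw [hW]
      exact Finset.mem_union_left _ (Finset.mem_image.mpr ⟨z, hzS, rfl⟩)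
    have hW3 : ∀ (y : {x : V // x ≠ f 1}), y ∉ S' → y.1 ∉ W := by
      intro y hy hyW
      rw [hW, Finset.mem_union] at hyW
      rcases hyW with h | h
      · obtain ⟨a', ha', ha2⟩ := Finset.mem_image.mp h
        exact hy (by rwa [Subtype.ext ha2] at ha')
      · exact y.2 (by simpa using h)
    -- the graph homomorphism from the W-complement to the S'-complement
    have hφmem : ∀ (x : (((↑W : Set V)ᶜ : Set V))),
        (⟨x.1, hW1 x.1 x.2⟩ : {x : V // x ≠ f 1}) ∈
          ((↑S' : Set {x : V // x ≠ f 1})ᶜ) := by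
      intro x
      exact hW2 ⟨x.1, hW1 x.1 x.2⟩ x.2
    set G' := contractEdge G (f 0) (f 1) with hG'
    let φ : (G.induce ((↑W : Set V)ᶜ)) →g (G'.induce ((↑S' : Set {x : V // x ≠ f 1})ᶜ)) :=
      ⟨fun x => ⟨⟨x.1, hW1 x.1 x.2⟩, hφmem x⟩, by
        intro x y hxy
        have hGxy : G.Adj x.1 y.1 := hxy
        show G'.Adj _ _
        rw [hG', contractEdge]
        rw [SimpleGraph.fromRel_adj]
        exact ⟨fun h => hGxy.ne (congrArg (fun (w : {z : V // z ≠ f 1}) => w.1) h),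
          Or.inl (Or.inl hGxy)⟩⟩
    -- preimages of the disconnection witnesses
    have haW : a.1.1 ∉ W := hW3 a.1 a.2
    have hbW : b.1.1 ∉ W := hW3 b.1 b.2
    set a₀ : (((↑W : Set V)ᶜ : Set V)) := ⟨a.1.1, haW⟩ with ha₀
    set b₀ : (((↑W : Set V)ᶜ : Set V)) := ⟨b.1.1, hbW⟩ with hb₀
    have hφa : φ a₀ = a := by
      apply Subtype.ext; apply Subtype.ext; rfl
    have hφb : φ b₀ = b := by
      apply Subtype.ext; apply Subtype.ext; rfl
    have hWdisc : ¬ (G.induce ((↑W : Set V)ᶜ)).Reachable a₀ b₀ := by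
      intro hr
      have := hr.map φ
      rw [hφa, hφb] at this
      exact hab this
    -- case on whether the contracted vertex was removed
    set u' : {x : V // x ≠ f 1} := ⟨f 0, hne 0 1 (by decide)⟩ with hu'def
    by_cases hu' : u' ∈ S'
    · -- u' removed : W contains both f 0 and f 1; almost-chordality is violated
      exfalso
      have huW : f 0 ∈ W := by
        rw [hW]
        exact Finset.mem_union_left _ (Finset.mem_image.mpr ⟨u', hu', rfl⟩)
      -- components
      set comp : (((↑W : Set V)ᶜ : Set V)) → Set V := fun c =>
        {z : V | ∃ hz : z ∈ ((↑W : Set V)ᶜ),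
          (G.induce ((↑W : Set V)ᶜ)).Reachable c ⟨z, hz⟩} with hcomp
      have hcompW : ∀ c z, z ∈ comp c → z ∉ W := by
        rintro c z ⟨hz, -⟩
        exact hz
    -- adjacency within the complement stays in a component
      have hcompstep : ∀ (c : (((↑W : Set V)ᶜ : Set V))) (x z : V),
          x ∈ comp c → z ∉ W → G.Adj x z → z ∈ comp c := by
        rintro c x z ⟨hx, hr⟩ hzW hadj
        have hzc : z ∈ ((↑W : Set V)ᶜ) := hzW
        have hedge : (G.induce ((↑W : Set V)ᶜ)).Adj ⟨x, hx⟩ ⟨z, hzc⟩ := hadj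
        exact ⟨hzc, hr.trans hedge.reachable⟩
      have hdisj : ∀ z, z ∈ comp a₀ → z ∈ comp b₀ → False := by
        rintro z ⟨hz1, hr1⟩ ⟨hz2, hr2⟩
        exact hWdisc (hr1.trans hr2.symm)
      have hcross : ∀ x, x ∈ comp a₀ → ∀ z, z ∈ comp b₀ → ¬ G.Adj x z ∧ x ≠ z := by
        intro x hx z hz
        constructor
        · intro hadj
          exact hdisj z (hcompstep a₀ x z hx (hcompW _ _ hz) hadj) hz
        · rintro rfl
          exact hdisj x hx hz
      -- per-component structure
      have shape : ∀ c : (((↑W : Set V)ᶜ : Set V)),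
          (∃ x, x ∈ comp c ∧ G.Adj (f 0) x ∧ G.Adj x (f 1)) ∨
          (∃ x y, x ∈ comp c ∧ y ∈ comp c ∧ x ≠ y ∧
            G.Adj (f 0) x ∧ G.Adj x y ∧ G.Adj y (f 1) ∧
            ¬G.Adj (f 0) y ∧ ¬G.Adj x (f 1)) := by
        intro c
        obtain ⟨yu, hyu1, hyu2⟩ := exists_adj_reach G hconn W hWk huW hWdisc c
        obtain ⟨yv, hyv1, hyv2⟩ := exists_adj_reach G hconn W hWk hvW hWdisc c
        set Ω : Set V := insert (f 0) (insert (f 1) (comp c)) with hΩdef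
        have hu0Ω : f 0 ∈ Ω := Set.mem_insert _ _
        have hv1Ω : f 1 ∈ Ω := Set.mem_insert_of_mem _ (Set.mem_insert _ _)
        have hcompΩ : comp c ⊆ Ω := fun z hz =>
          Set.mem_insert_of_mem _ (Set.mem_insert_of_mem _ hz)
        have hyucomp : yu.1 ∈ comp c := ⟨yu.2, hyu2⟩
        have hyvcomp : yv.1 ∈ comp c := ⟨yv.2, hyv2⟩
        have hΩreach : ∀ z : ((↑W : Set V)ᶜ : Set V),
            (G.induce ((↑W : Set V)ᶜ)).Reachable c z → z.1 ∈ Ω := by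
          intro z hzr
          exact hcompΩ ⟨z.2, by convert hzr⟩
        -- reach inside Ω from yu to yv
        obtain ⟨pmid⟩ : (G.induce ((↑W : Set V)ᶜ)).Reachable yu yv := hyu2.symm.trans hyv2
        have hmid := reach_transfer G (f 0) (f 1) W huW hvW Ω c hΩreach yu yv pmid hyu2
          (hcompΩ hyucomp) (hcompΩ hyvcomp)
        have hyune : yu.1 ∉ W := yu.2
        have hyvne : yv.1 ∉ W := yv.2
        have hne1 : ¬ s(f 0, yu.1) = s(f 0, f 1) := by
          rw [Sym2.eq_iff]
          rintro (⟨h1, h2⟩ | ⟨h1, h2⟩)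
          · exact hyune (h2 ▸ hvW)
          · exact hyune (h2 ▸ huW)
        have hne2' : ¬ s(yv.1, f 1) = s(f 0, f 1) := by
          rw [Sym2.eq_iff]
          rintro (⟨h1, h2⟩ | ⟨h1, h2⟩)
          · exact hyvne (h1 ▸ huW)
          · exact hyvne (h1 ▸ hvW)
        have hedge1 : ((G.deleteEdges {s(f 0, f 1)}).induce Ω).Adj ⟨f 0, hu0Ω⟩
            ⟨yu.1, hcompΩ hyucomp⟩ := by
          refine (SimpleGraph.deleteEdges_adj).mpr ⟨hyu1, by simpa using hne1⟩
        have hedge2 : ((G.deleteEdges {s(f 0, f 1)}).induce Ω).Adj ⟨yv.1, hcompΩ hyvcomp⟩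
            ⟨f 1, hv1Ω⟩ := by
          refine (SimpleGraph.deleteEdges_adj).mpr ⟨hyv1.symm, by simpa using hne2'⟩
        have hreach : ((G.deleteEdges {s(f 0, f 1)}).induce Ω).Reachable ⟨f 0, hu0Ω⟩
            ⟨f 1, hv1Ω⟩ := (hedge1.reachable.trans hmid).trans hedge2.reachable
        have := tri_or_c4 G hac.1 huv Ω hu0Ω hv1Ω hreach
        rcases this with ⟨x, hxΩ, hxu, hxv, hx1, hx2⟩ | ⟨x, hxΩ, y, hyΩ, hxu, hxv, hyu', hyv', hxy, hh1, hh2, hh3, hh4, hh5⟩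
        · left
          refine ⟨x, ?_, hx1, hx2⟩
          rcases hxΩ with h | h
          · exact absurd h hxu
          rcases h with h | h
          · exact absurd h hxv
          · exact h
        · right
          have hxc : x ∈ comp c := by
            rcases hxΩ with h | h
            · exact absurd h hxu
            rcases h with h | h
            · exact absurd h hxv
            · exact h
          have hyc : y ∈ comp c := by
            rcases hyΩ with h | h
            · exact absurd h hyu'
            rcases h with h | h
            · exact absurd h hyv'
            · exact h
          exact ⟨x, y, hxc, hyc, hxy, hh1, hh2, hh3, hh4, hh5⟩
      -- C4-set helpers
      have hC4f : IsC4Set G (Set.range f) := ⟨f, ⟨finj, fadj⟩, rfl⟩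
      have two_c4 : ∀ (s t : Set V), IsC4Set G s → IsC4Set G t → s ≠ t →
          ∀ p q : V, p ∈ s → p ∈ t → q ∈ s → q ∈ t → p ≠ q → False := by
        intro s t hs ht hst p q hps hpt hqs hqt hpq
        exact hpq (hac.2.2 s t hs ht hst ⟨hps, hpt⟩ ⟨hqs, hqt⟩)
      -- common neighbours of f0 and f1 are adjacent to f2 and f3
      have tri_helper : ∀ x : V, x ≠ f 0 → x ≠ f 1 → G.Adj (f 0) x → G.Adj x (f 1) →
          G.Adj x (f 2) ∧ G.Adj x (f 3) := by
        intro x hx0 hx1 hadj0 hadj1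
        have hx2 : x ≠ f 2 := by
          intro h
          exact n02 (h ▸ hadj0)
        have hx3 : x ≠ f 3 := by
          intro h
          exact n13 (h ▸ hadj1).symm
        by_cases ha2 : G.Adj x (f 2) <;> by_cases ha3 : G.Adj x (f 3)
        · exact ⟨ha2, ha3⟩
        · -- x-f2 adjacent, x-f3 not: two C4s sharing f0 f2... cycle (f0, x, f2, f3)
          exfalso
          have hcyc := isInducedCycle_of G hadj0 ha2 h23 h30 n02 ha3
            (hne 0 2 (by decide)) hx3
          have ht : IsC4Set G (Set.range (cyc4 (f 0) x (f 2) (f 3))) := ⟨_, hcyc, rfl⟩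
          refine two_c4 _ _ hC4f ht ?_ (f 0) (f 2) ?_ ?_ ?_ ?_ (hne 0 2 (by decide))
          · intro heq
            have : f 1 ∈ Set.range (cyc4 (f 0) x (f 2) (f 3)) := by
              rw [← heq, hrangef]
              tauto
            rw [mem_range_cyc4] at this
            rcases this with h | h | h | h
            · exact hne 1 0 (by decide) h
            · exact hx1 h.symm
            · exact hne 1 2 (by decide) h
            · exact hne 1 3 (by decide) h
          · rw [hrangef]; tauto
          · rw [mem_range_cyc4]; tauto
          · rw [hrangef]; tauto
          · rw [mem_range_cyc4]; tauto
        · -- x-f3 adjacent, x-f2 not: cycle (f1, x, f3, f2)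
          exfalso
          have hcyc := isInducedCycle_of G hadj1.symm ha3 h23.symm h12.symm n13 ha2
            (hne 1 3 (by decide)) hx2
          have ht : IsC4Set G (Set.range (cyc4 (f 1) x (f 3) (f 2))) := ⟨_, hcyc, rfl⟩
          refine two_c4 _ _ hC4f ht ?_ (f 2) (f 3) ?_ ?_ ?_ ?_ (hne 2 3 (by decide))
          · intro heq
            have : f 0 ∈ Set.range (cyc4 (f 1) x (f 3) (f 2)) := by
              rw [← heq, hrangef]
              tauto
            rw [mem_range_cyc4] at this
            rcases this with h | h | h | h
            · exact hne 0 1 (by decide) h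
            · exact hx0 h.symm
            · exact hne 0 3 (by decide) h
            · exact hne 0 2 (by decide) h
          · rw [hrangef]; tauto
          · rw [mem_range_cyc4]; tauto
          · rw [hrangef]; tauto
          · rw [mem_range_cyc4]; tauto
        · -- adjacent to neither: house on (f1, f0, f3, f2) with apex x
          exfalso
          apply hac.2.1
          refine ⟨cyc4 (f 1) (f 0) (f 3) (f 2), x, ?_, ?_, ?_, ?_, ?_, ?_⟩
          · exact isInducedCycle_of G huv.symm h30.symm h23.symm h12.symm n13 n02
              (hne 1 3 (by decide)) (hne 0 2 (by decide))
          · intro i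
            rcases zmod4_cases i with h | h | h | h <;> subst h <;>
              simp only [cyc4_zero, cyc4_one, cyc4_two, cyc4_three]
            · exact hx1
            · exact hx0
            · exact hx3
            · exact hx2
          · rw [cyc4_zero]; exact hadj1
          · rw [cyc4_one]; exact hadj0.symm
          · rw [cyc4_two]; exact ha3
          · rw [cyc4_three]; exact ha2
      -- apply structure to both components
      rcases shape a₀ with ⟨xA, hxA, hA1, hA2⟩ | ⟨xA, yA, hxA, hyA, hxyA, hA1, hA2, hA3, hA4, hA5⟩ <;>
        rcases shape b₀ with ⟨xB, hxB, hB1, hB2⟩ | ⟨xB, yB, hxB, hyB, hxyB, hB1, hB2, hB3, hB4, hB5⟩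
      · -- triangle - triangle
        have hxAW := hcompW _ _ hxA
        have hxBW := hcompW _ _ hxB
        have hA := tri_helper xA (fun h => hxAW (h ▸ huW)) (fun h => hxAW (h ▸ hvW)) hA1 hA2
        have hB := tri_helper xB (fun h => hxBW (h ▸ huW)) (fun h => hxBW (h ▸ hvW)) hB1 hB2
        obtain ⟨hcr, hcne⟩ := hcross xA hxA xB hxB
        -- two C4s (xA, f0, xB, f2) and (xA, f1, xB, f3) sharing xA, xB
        have hc1 := isInducedCycle_of G hA1.symm hB1 hB.1 hA.1.symm hcr n02
          hcne (hne 0 2 (by decide))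
        have hc2 := isInducedCycle_of G hA2 hB2.symm hB.2 hA.2.symm hcr n13
          hcne (hne 1 3 (by decide))
        refine two_c4 _ _ (⟨_, hc1, rfl⟩ : IsC4Set G _) (⟨_, hc2, rfl⟩ : IsC4Set G _)
          ?_ xA xB ?_ ?_ ?_ ?_ hcne
        · intro heq
          have : f 0 ∈ Set.range (cyc4 xA (f 1) xB (f 3)) := by
            rw [← heq, mem_range_cyc4]
            tauto
          rw [mem_range_cyc4] at this
          rcases this with h | h | h | h
          · exact hxAW (h.symm ▸ huW)
          · exact hne 0 1 (by decide) h
          · exact hxBW (h.symm ▸ huW)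
          · exact hne 0 3 (by decide) h
        · rw [mem_range_cyc4]; tauto
        · rw [mem_range_cyc4]; tauto
        · rw [mem_range_cyc4]; tauto
        · rw [mem_range_cyc4]; tauto
      · -- triangle in A, C4 in B : house
        have hxAW := hcompW _ _ hxA
        obtain ⟨hcrx, hcnex⟩ := hcross xA hxA xB hxB
        obtain ⟨hcry, hcney⟩ := hcross xA hxA yB hyB
        apply hac.2.1
        refine ⟨cyc4 (f 1) (f 0) xB yB, xA, ?_, ?_, ?_, ?_, ?_, ?_⟩
        · exact isInducedCycle_of G huv.symm hB1 hB2 hB3 (fun h => hB5 h.symm) hB4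
            (fun h => (hcompW _ _ hxB) (h ▸ hvW)) (fun h => (hcompW _ _ hyB) (h ▸ huW))
        · intro i
          rcases zmod4_cases i with h | h | h | h <;> subst h <;>
            simp only [cyc4_zero, cyc4_one, cyc4_two, cyc4_three]
          · exact fun h => hxAW (h ▸ hvW)
          · exact fun h => hxAW (h ▸ huW)
          · exact hcnex
          · exact hcney
        · rw [cyc4_zero]; exact hA2
        · rw [cyc4_one]; exact hA1.symm
        · rw [cyc4_two]; exact hcrx
        · rw [cyc4_three]; exact hcry
      · -- C4 in A, triangle in B : house
        have hxBW := hcompW _ _ hxB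
        obtain ⟨hcrx, hcnex⟩ := hcross xA hxA xB hxB
        obtain ⟨hcry, hcney⟩ := hcross yA hyA xB hxB
        apply hac.2.1
        refine ⟨cyc4 (f 1) (f 0) xA yA, xB, ?_, ?_, ?_, ?_, ?_, ?_⟩
        · exact isInducedCycle_of G huv.symm hA1 hA2 hA3 (fun h => hA5 h.symm) hA4
            (fun h => (hcompW _ _ hxA) (h ▸ hvW)) (fun h => (hcompW _ _ hyA) (h ▸ huW))
        · intro i
          rcases zmod4_cases i with h | h | h | h <;> subst h <;>
            simp only [cyc4_zero, cyc4_one, cyc4_two, cyc4_three]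
          · exact fun h => hxBW (h ▸ hvW)
          · exact fun h => hxBW (h ▸ huW)
          · exact fun h => hcnex h.symm
          · exact fun h => hcney h.symm
        · rw [cyc4_zero]; exact hB2
        · rw [cyc4_one]; exact hB1.symm
        · rw [cyc4_two]; exact fun h => hcrx h.symm
        · rw [cyc4_three]; exact fun h => hcry h.symm
      · -- C4 - C4 : two C4s sharing f0 f1
        have hxAW := hcompW _ _ hxA
        have hyAW := hcompW _ _ hyA
        obtain ⟨hcr1, hne1⟩ := hcross xA hxA xB hxB
        obtain ⟨hcr2, hne2⟩ := hcross xA hxA yB hyB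
        have hc1 := isInducedCycle_of G hA1 hA2 hA3 huv.symm hA4 hA5
          (fun h => hyAW (h ▸ huW)) (fun h => hxAW (h ▸ hvW))
        have hc2 := isInducedCycle_of G hB1 hB2 hB3 huv.symm hB4 hB5
          (fun h => (hcompW _ _ hyB) (h ▸ huW)) (fun h => (hcompW _ _ hxB) (h ▸ hvW))
        refine two_c4 _ _ (⟨_, hc1, rfl⟩ : IsC4Set G _) (⟨_, hc2, rfl⟩ : IsC4Set G _)
          ?_ (f 0) (f 1) ?_ ?_ ?_ ?_ (hne 0 1 (by decide))
        · intro heq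
          have : xA ∈ Set.range (cyc4 (f 0) xB yB (f 1)) := by
            rw [← heq, mem_range_cyc4]
            tauto
          rw [mem_range_cyc4] at this
          rcases this with h | h | h | h
          · exact hxAW (h ▸ huW)
          · exact hne1 h
          · exact hne2 h
          · exact hxAW (h ▸ hvW)
        · rw [mem_range_cyc4]; tauto
        · rw [mem_range_cyc4]; tauto
        · rw [mem_range_cyc4]; tauto
        · rw [mem_range_cyc4]; tauto
    · -- u' not removed : contract target keeps connectivity via neighbours of f 1
      have hu'm : u' ∈ ((↑S' : Set {x : V // x ≠ f 1})ᶜ) := hu'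
      have hall : ∀ t : (((↑S' : Set {x : V // x ≠ f 1})ᶜ : Set {x : V // x ≠ f 1})),
          (G'.induce ((↑S' : Set {x : V // x ≠ f 1})ᶜ)).Reachable t ⟨u', hu'm⟩ := by
        intro t
        have htW : t.1.1 ∉ W := hW3 t.1 t.2
        set t₀ : (((↑W : Set V)ᶜ : Set V)) := ⟨t.1.1, htW⟩ with ht₀
        obtain ⟨y, hy1, hy2⟩ := exists_adj_reach G hconn W hWk hvW hWdisc t₀
        have hmap := hy2.map φ
        have hφt : φ t₀ = t := by
          apply Subtype.ext; apply Subtype.ext; rfl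
        rw [hφt] at hmap
        by_cases hy0 : y.1 = f 0
        · have : φ y = ⟨u', hu'm⟩ := by
            apply Subtype.ext; apply Subtype.ext; exact hy0
          rwa [this] at hmap
        · refine hmap.trans ?_
          have hadj0 : G'.Adj ⟨y.1, hW1 y.1 y.2⟩ u' := by
            rw [hG', contractEdge]
            rw [SimpleGraph.fromRel_adj]
            exact ⟨fun h => hy0 (congrArg (fun (w : {z : V // z ≠ f 1}) => w.1) h),
              Or.inr (Or.inr (Or.inl ⟨rfl, hy1⟩))⟩
          have hadj : (G'.induce ((↑S' : Set {x : V // x ≠ f 1})ᶜ)).Adj (φ y) ⟨u', hu'm⟩ := hadj0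
          exact hadj.reachable
      exact hab ((hall a).trans (hall b).symm)
end
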